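/- Let F : ℝⁿ → ℝⁿ be Lipschitz continuous, let h : ℝⁿ → ℝ be continuously differentiable, and let a > 0 be such that ⟨∇h(x), F(x)⟩ ≥ -a·h(x) for all x ∈ ℝⁿ. Then for every solution x : [0, ∞) → ℝⁿ of the ODE ẋ = F(x) with h(x(0)) ≥ 0, one has h(x(t)) ≥ 0 for all t ≥ 0; that is, the safe set S = {x ∈ ℝⁿ : h(x) ≥ 0} is forward invariant along the closed-loop system. -/

import Mathlib

/-- Safety guarantee of CBF-based controllers (Theorem 1 of the paper, closed-loop form,
with linear class-`K∞` rate `α(s) = a·s`): if `F` is Lipschitz, `h` is `C¹` and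
`⟨∇h x, F x⟩ ≥ -a · h x` for all `x`, then along every solution of `ẋ = F x` starting in
the safe set `S = {x : h x ≥ 0}`, the state remains in `S`, i.e. `S` is forward invariant. -/
theorem cbf_safe_set_forward_invariant
    (n : ℕ) (F : EuclideanSpace ℝ (Fin n) → EuclideanSpace ℝ (Fin n))
    (K : NNReal) (hF : LipschitzWith K F)
    (h : EuclideanSpace ℝ (Fin n) → ℝ) (hh : ContDiff ℝ 1 h)
    (a : ℝ) (ha : 0 < a)
    (hcbf : ∀ x, (inner ℝ (gradient h x) (F x) : ℝ) ≥ -a * h x)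
    (x : ℝ → EuclideanSpace ℝ (Fin n))
    (hsol : ∀ t ≥ (0 : ℝ), HasDerivAt x (F (x t)) t)
    (hinit : h (x 0) ≥ 0) :
    ∀ t ≥ (0 : ℝ), h (x t) ≥ 0 := by
  have hdiff : Differentiable ℝ h := hh.differentiable one_ne_zero
  -- derivative of y t = h (x t)
  have hy : ∀ t ≥ (0 : ℝ),
      HasDerivAt (fun t => h (x t)) (inner ℝ (gradient h (x t)) (F (x t)) : ℝ) t := by
    intro t ht
    have := ((hdiff (x t)).hasGradientAt.hasFDerivAt).comp_hasDerivAt t (hsol t ht)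
    simpa [InnerProductSpace.toDual_apply_apply, Function.comp_def] using this
  -- w t = exp (a t) * h (x t)
  set w : ℝ → ℝ := fun t => Real.exp (a * t) * h (x t) with hw
  have hw' : ∀ t ≥ (0 : ℝ), HasDerivAt w
      (a * Real.exp (a * t) * h (x t)
        + Real.exp (a * t) * (inner ℝ (gradient h (x t)) (F (x t)) : ℝ)) t := by
    intro t ht
    have he : HasDerivAt (fun t => Real.exp (a * t)) (a * Real.exp (a * t)) t := by
      simpa [mul_comm, Function.comp_def] using (Real.hasDerivAt_exp (a * t)).comp t
        ((hasDerivAt_id t).const_mul a)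
    exact he.mul (hy t ht)
  have hmono : MonotoneOn w (Set.Ici (0 : ℝ)) := by
    apply monotoneOn_of_deriv_nonneg (convex_Ici 0)
    · exact fun t ht => ((hw' t ht).continuousAt).continuousWithinAt
    · intro t ht
      rw [interior_Ici] at ht
      exact ((hw' t ht.le).differentiableAt).differentiableWithinAt
    · intro t ht
      rw [interior_Ici] at ht
      rw [(hw' t ht.le).deriv]
      have h1 := hcbf (x t)
      have h2 : (0 : ℝ) < Real.exp (a * t) := Real.exp_pos _
      nlinarith [h2]
  intro t ht
  have : w 0 ≤ w t := hmono Set.self_mem_Ici ht ht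
  have h0 : w 0 = h (x 0) := by simp [hw]
  have hexp : (0 : ℝ) < Real.exp (a * t) := Real.exp_pos _
  have : 0 ≤ Real.exp (a * t) * h (x t) := by
    calc (0:ℝ) ≤ w 0 := by rw [h0]; exact hinit
    _ ≤ w t := ‹w 0 ≤ w t›
  nlinarith [hexp]
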